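/- arXiv:2502.18293 — 2 statements merged into one kernel-verified Lean document; each statement's English description precedes it below -/
import Mathlib

section
/- If the feasibility condition L · sum_{i∉S∪{i_top}} min_{j∈S} A_{i,j} ≤ 1 holds, then the assignment p_i = L · min_{j∈S} A_{i,j} for i ∉ S ∪ {i_top}, p_j = 0 for j ∈ S, and p_{i_top} = 1 − L · sum_{i∉S∪{i_top}} min_{j∈S} A_{i,j} defines a valid feasible probability vector, and it achieves expected reward exactly r_max − L · Cost(S). -/
/-- Minimum distance from `i` to the set `S` (w.r.t. `A`), `0` if `S` is empty. -/
noncomputable def minDist {N : ℕ} (A : Fin N → Fin N → ℝ) (S : Finset (Fin N)) (i : Fin N) : ℝ :=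
  if h : S.Nonempty then S.inf' h (fun j => A i j) else 0

lemma minDist_nonneg {N : ℕ} (A : Fin N → Fin N → ℝ) (hA : ∀ i j, 0 ≤ A i j)
    (S : Finset (Fin N)) (i : Fin N) : 0 ≤ minDist A S i := by
  unfold minDist
  split
  · exact Finset.le_inf' _ _ fun j _ => hA i j
  · exact le_refl 0

lemma minDist_mem_zero {N : ℕ} (A : Fin N → Fin N → ℝ) (hA : ∀ i j, 0 ≤ A i j)
    (hAdiag : ∀ i, A i i = 0) (S : Finset (Fin N)) (i : Fin N) (hi : i ∈ S) :
    minDist A S i = 0 := by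
  have h : S.Nonempty := ⟨i, hi⟩
  refine le_antisymm ?_ (minDist_nonneg A hA S i)
  unfold minDist
  rw [dif_pos h]
  calc S.inf' h (fun j => A i j) ≤ A i i := Finset.inf'_le _ hi
    _ = 0 := hAdiag i

/-- Under the feasibility condition, the explicit witness assignment is a feasible
probability vector and achieves expected reward exactly `rmax − L · Cost(S)`. -/
theorem witness_achieves_reward {N : ℕ} (r : Fin N → ℝ) (rmax : ℝ)
    (A : Fin N → Fin N → ℝ) (L : ℝ) (hL : 0 < L)
    (S : Finset (Fin N)) (hS : S.Nonempty)
    (itop : Fin N) (hitop : itop ∉ S) (hrtop : r itop = rmax)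
    (hub : ∀ i, r i ≤ rmax)
    (hA : ∀ i j, 0 ≤ A i j) (hAdiag : ∀ i, A i i = 0)
    (hfeas : L * ∑ i ∈ Finset.univ \ insert itop S, minDist A S i ≤ 1) :
    ∀ p : Fin N → ℝ,
      (p = fun i => if i ∈ S then 0 else if i = itop then
          1 - L * ∑ i ∈ Finset.univ \ insert itop S, minDist A S i
        else L * minDist A S i) →
      (∀ j ∈ S, p j = 0) ∧
      (∀ i, i ∉ S → i ≠ itop → p i ≤ L * minDist A S i) ∧
      (∀ i, 0 ≤ p i) ∧
      (∑ i, p i = 1) ∧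
      (∑ i, r i * p i = rmax - L * ∑ i, (rmax - r i) * minDist A S i) := by
  intro p hp
  subst hp
  set T := Finset.univ \ insert itop S with hT
  set Sm := ∑ i ∈ T, minDist A S i with hSm
  have hSm_nonneg : 0 ≤ Sm := Finset.sum_nonneg fun i _ => minDist_nonneg A hA S i
  have hTmem : ∀ i, i ∈ T ↔ i ≠ itop ∧ i ∉ S := by
    intro i
    simp [hT, Finset.mem_insert, not_or]
  have hsplit : (Finset.univ : Finset (Fin N)) = insert itop S ∪ T := by
    ext i
    by_cases h1 : i = itop <;> by_cases h2 : i ∈ S <;>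
      simp [hT, Finset.mem_insert, h1, h2]
  have hdisj : Disjoint (insert itop S) T := by
    rw [Finset.disjoint_right]
    intro i hi
    simp [hT] at hi
    simp [Finset.mem_insert, hi.1, hi.2]
  refine ⟨?_, ?_, ?_, ?_, ?_⟩
  · intro j hj; simp [hj]
  · intro i hiS hitop'; simp [hiS, hitop']
  · intro i
    by_cases h2 : i ∈ S
    · simp [h2]
    by_cases h1 : i = itop
    · simp [h1, hitop]; linarith
    · simp [h2, h1]
      exact mul_nonneg hL.le (minDist_nonneg A hA S i)
  · rw [hsplit, Finset.sum_union hdisj, Finset.sum_insert hitop]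
    have h1 : ∑ j ∈ S, (if j ∈ S then (0:ℝ) else if j = itop then
        1 - L * Sm else L * minDist A S j) = 0 := by
      apply Finset.sum_eq_zero
      intro j hj; simp [hj]
    have h2 : ∑ i ∈ T, (if i ∈ S then (0:ℝ) else if i = itop then
        1 - L * Sm else L * minDist A S i) = L * Sm := by
      rw [Finset.mul_sum]
      apply Finset.sum_congr rfl
      intro i hi
      rw [hTmem] at hi
      simp [hi.1, hi.2]
    rw [if_neg hitop, if_pos rfl, h1, h2]; ring
  · have hL1 : ∑ i, r i * (if i ∈ S then (0:ℝ) else if i = itop then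
        1 - L * Sm else L * minDist A S i)
        = r itop * (1 - L * Sm) + ∑ i ∈ T, r i * (L * minDist A S i) := by
      rw [hsplit, Finset.sum_union hdisj, Finset.sum_insert hitop]
      have h1 : ∑ j ∈ S, r j * (if j ∈ S then (0:ℝ) else if j = itop then
          1 - L * Sm else L * minDist A S j) = 0 := by
        apply Finset.sum_eq_zero; intro j hj; simp [hj]
      rw [h1, if_neg hitop, if_pos rfl, add_zero]
      congr 1
      apply Finset.sum_congr rfl
      intro i hi
      rw [hTmem] at hi
      simp [hi.1, hi.2]
    have hR1 : ∑ i, (rmax - r i) * minDist A S i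
        = ∑ i ∈ T, (rmax - r i) * minDist A S i := by
      rw [hsplit, Finset.sum_union hdisj, Finset.sum_insert hitop]
      have h1 : ∑ j ∈ S, (rmax - r j) * minDist A S j = 0 := by
        apply Finset.sum_eq_zero; intro j hj
        rw [minDist_mem_zero A hA hAdiag S j hj, mul_zero]
      rw [h1, hrtop, sub_self, zero_mul, zero_add, zero_add]
    rw [hL1, hR1, hrtop]
    have : ∑ i ∈ T, (rmax - r i) * minDist A S i
        = rmax * Sm - ∑ i ∈ T, r i * minDist A S i := by
      rw [hSm, Finset.mul_sum, ← Finset.sum_sub_distrib]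
      apply Finset.sum_congr rfl; intros; ring
    rw [this]
    have : ∑ i ∈ T, r i * (L * minDist A S i) = L * ∑ i ∈ T, r i * minDist A S i := by
      rw [Finset.mul_sum]; apply Finset.sum_congr rfl; intros; ring
    rw [this]; ring
end

section
/- The optimal value of the MIP P over all feasible assignments equals min over size-K subsets S of sum_i w_i · min_{j∈S} A_{i,j}; that is, solving P is equivalent to minimizing the weighted coverage cost over all subsets of size K. -/
/-- Feasibility for the MIP `P`: exactly `K` selected centers, each point assigned to
exactly one selected center, and big-`M` linking constraints on `y`. -/
def FeasibleMIP {N : ℕ} (K : ℕ) (A : Fin N → Fin N → ℝ) (M : ℝ)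
    (x : Fin N → Bool) (z : Fin N → Fin N → Bool) (y : Fin N → ℝ) : Prop :=
  (Finset.univ.filter (fun j => x j = true)).card = K ∧
  (∀ i j, z i j = true → x j = true) ∧
  (∀ i, ∃! j, z i j = true) ∧
  (∀ i, 0 ≤ y i) ∧
  (∀ i j, y i ≤ A i j + M * (1 - (if z i j then (1 : ℝ) else 0))) ∧
  (∀ i j, A i j - M * (1 - (if z i j then (1 : ℝ) else 0)) ≤ y i)

/-- The optimal value of the MIP `P` equals the minimum weighted coverage cost over all
size-`K` subsets. -/
theorem mip_equals_coverage_min {N K : ℕ} (hK : 0 < K) (hKN : K ≤ N)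
    (A : Fin N → Fin N → ℝ) (hA : ∀ i j, 0 ≤ A i j)
    (M : ℝ) (hM : ∀ i j, A i j ≤ M)
    (w : Fin N → ℝ) (hw : ∀ i, 0 ≤ w i) :
    sInf {v : ℝ | ∃ x z y, FeasibleMIP K A M x z y ∧ v = ∑ i, w i * y i}
      = sInf {v : ℝ | ∃ S : Finset (Fin N), S.card = K ∧ v = ∑ i, w i * minDist A S i} := by
  set T1 := {v : ℝ | ∃ x z y, FeasibleMIP K A M x z y ∧ v = ∑ i, w i * y i} with hT1
  set T2 := {v : ℝ | ∃ S : Finset (Fin N), S.card = K ∧ v = ∑ i, w i * minDist A S i} with hT2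
  -- T2 ⊆ T1
  have hsub : T2 ⊆ T1 := by
    rintro v ⟨S, hS, rfl⟩
    have hSne : S.Nonempty := Finset.card_pos.mp (hS ▸ hK)
    choose f hf hfEq using fun i => Finset.exists_mem_eq_inf' hSne (fun j => A i j)
    have hmd : ∀ i, minDist A S i = A i (f i) := by
      intro i; rw [minDist, dif_pos hSne]; exact hfEq i
    refine ⟨fun j => decide (j ∈ S), fun i j => decide (j = f i), fun i => A i (f i),
      ⟨?_, ?_, ?_, ?_, ?_, ?_⟩, ?_⟩
    · rw [← hS]; congr 1; ext j; simp
    · intro i j h; simp at h ⊢; exact h ▸ hf i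
    · intro i; exact ⟨f i, by simp, fun j hj => by simpa using hj⟩
    · intro i; exact hA i (f i)
    · intro i j
      by_cases h : j = f i
      · subst h; simp
      · simp only [decide_eq_true_eq, if_neg h]
        have : A i (f i) ≤ M := hM i (f i)
        nlinarith [hA i j]
    · intro i j
      by_cases h : j = f i
      · subst h; simp
      · simp only [decide_eq_true_eq, if_neg h]
        have : A i j ≤ M := hM i j
        nlinarith [hA i (f i)]
    · exact Finset.sum_congr rfl fun i _ => by rw [hmd]
  -- every element of T1 dominates an element of T2
  have hdom : ∀ v ∈ T1, ∃ u ∈ T2, u ≤ v := by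
    rintro v ⟨x, z, y, ⟨hcard, hzx, hz, hy0, hub, hlb⟩, rfl⟩
    choose f hf hfu using hz
    set S : Finset (Fin N) := Finset.univ.filter (fun j => x j = true) with hSdef
    have hfS : ∀ i, f i ∈ S := fun i => by
      simp [hSdef]; exact hzx i (f i) (hf i)
    have hSne : S.Nonempty := Finset.card_pos.mp (hcard ▸ hK)
    have hyEq : ∀ i, y i = A i (f i) := by
      intro i
      have h1 := hub i (f i); have h2 := hlb i (f i)
      rw [if_pos (hf i)] at h1 h2
      simp at h1 h2; linarith
    refine ⟨∑ i, w i * minDist A S i, ⟨S, hcard, rfl⟩, ?_⟩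
    apply Finset.sum_le_sum
    intro i _
    apply mul_le_mul_of_nonneg_left _ (hw i)
    rw [hyEq, minDist, dif_pos hSne]
    exact Finset.inf'_le _ (hfS i)
  -- boundedness and nonemptiness
  have hbdd1 : BddBelow T1 := by
    refine ⟨0, ?_⟩
    rintro v ⟨x, z, y, ⟨_, _, _, hy0, _, _⟩, rfl⟩
    exact Finset.sum_nonneg fun i _ => mul_nonneg (hw i) (hy0 i)
  have hne2 : T2.Nonempty := by
    obtain ⟨S, -, hS⟩ := Finset.exists_subset_card_eq (s := (Finset.univ : Finset (Fin N))) (n := K)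
      (by simpa using hKN)
    exact ⟨_, S, hS, rfl⟩
  have hne1 : T1.Nonempty := hne2.mono hsub
  have hbdd2 : BddBelow T2 := hbdd1.mono hsub
  apply le_antisymm
  · exact csInf_le_csInf hbdd1 hne2 hsub
  · apply le_csInf hne1
    intro v hv
    obtain ⟨u, hu, hle⟩ := hdom v hv
    exact le_trans (csInf_le hbdd2 hu) hle
end
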